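/- Let S be a set, 𝒜 a nonempty finite set, d ≥ 1, H > 0, and φ : S × 𝒜 → ℝ^d a map with ‖φ(x,a)‖₂ ≤ 1 for all (x,a). For a vector w ∈ ℝ^d and a symmetric positive semidefinite d×d matrix A, define V_{w,A} : S → ℝ by V_{w,A}(x) = min{ max_{a∈𝒜} ( ⟨w, φ(x,a)⟩ + √(φ(x,a)ᵀ A φ(x,a)) ), H }. Let L > 0, B > 0, λ̃ > 0, and ε > 0. Then there exists a finite set C of functions from S to ℝ, each of the form V_{w',A'} with ‖w'‖₂ ≤ L and A' symmetric positive semidefinite with Frobenius norm ‖A'‖_F ≤ √d B²/λ̃, such that |C| ≤ (1 + 4L/ε)^d · (1 + 8√d B²/(λ̃ ε²))^{d²}, and for every w with ‖w‖₂ ≤ L and every symmetric positive semidefinite A with ‖A‖_F ≤ √d B²/λ̃ there is V' ∈ C with sup_{x∈S} |V_{w,A}(x) − V'(x)| ≤ ε. -/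

import Mathlib

open scoped BigOperators Matrix
open Metric MeasureTheory
open scoped ENNReal



-- helper lemmas
lemma my_sqrt_add_le {a b : ℝ} (ha : 0 ≤ a) (hb : 0 ≤ b) :
    Real.sqrt (a + b) ≤ Real.sqrt a + Real.sqrt b := by
  rw [show a + b = a + b from rfl]
  have h : a + b ≤ (Real.sqrt a + Real.sqrt b) ^ 2 := by
    rw [add_sq, Real.sq_sqrt ha, Real.sq_sqrt hb]
    nlinarith [Real.sqrt_nonneg a, Real.sqrt_nonneg b]
  calc Real.sqrt (a + b) ≤ Real.sqrt ((Real.sqrt a + Real.sqrt b) ^ 2) := Real.sqrt_le_sqrt h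
    _ = Real.sqrt a + Real.sqrt b := Real.sqrt_sq (by positivity)

lemma my_abs_sqrt_sub_sqrt {a b : ℝ} (ha : 0 ≤ a) (hb : 0 ≤ b) :
    |Real.sqrt a - Real.sqrt b| ≤ Real.sqrt |a - b| := by
  have key : ∀ x y : ℝ, 0 ≤ x → 0 ≤ y → y ≤ x →
      Real.sqrt x - Real.sqrt y ≤ Real.sqrt (x - y) := by
    intro x y hx hy hyx
    have := my_sqrt_add_le hy (sub_nonneg.2 hyx)
    rw [add_sub_cancel] at this
    linarith
  rcases le_total b a with h | h
  · rw [abs_of_nonneg (sub_nonneg.2 h), abs_of_nonneg (sub_nonneg.2 (Real.sqrt_le_sqrt h))]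
    exact key a b ha hb h
  · rw [abs_of_nonpos (sub_nonpos.2 h), abs_of_nonpos (sub_nonpos.2 (Real.sqrt_le_sqrt h)),
      neg_sub, neg_sub]
    exact key b a hb ha h

lemma my_abs_min_sub_min (a b c : ℝ) : |min a c - min b c| ≤ |a - b| := by
  have := abs_min_sub_min_le_max a c b c
  simpa using this

lemma my_cs {ι : Type*} [Fintype ι] (f g : ι → ℝ) :
    |∑ i, f i * g i| ≤ Real.sqrt (∑ i, f i ^ 2) * Real.sqrt (∑ i, g i ^ 2) := by
  rw [← Real.sqrt_sq_eq_abs, ← Real.sqrt_mul (by positivity)]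
  exact Real.sqrt_le_sqrt (Finset.sum_mul_sq_le_sq_mul_sq _ _ _)

lemma my_sup'_diff {𝒜 : Type*} [Fintype 𝒜] (hne : (Finset.univ : Finset 𝒜).Nonempty)
    (f g : 𝒜 → ℝ) (c : ℝ) (h : ∀ a, |f a - g a| ≤ c) :
    |Finset.univ.sup' hne f - Finset.univ.sup' hne g| ≤ c := by
  rw [abs_sub_le_iff]
  constructor <;>
  · rw [sub_le_iff_le_add]
    apply Finset.sup'_le
    intro a _
    have h1 := h a
    rw [abs_sub_le_iff] at h1
    have h2 : g a ≤ Finset.univ.sup' hne g := Finset.le_sup' g (Finset.mem_univ a)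
    have h3 : f a ≤ Finset.univ.sup' hne f := Finset.le_sup' f (Finset.mem_univ a)
    rcases h1 with ⟨ha1, ha2⟩
    first
      | linarith
      | linarith



lemma packing_lemma {ι : Type*} [Fintype ι] [Nonempty ι]
    {R : ℝ} (hR : 0 ≤ R) {r : ℝ} (hr : 0 < r)
    (s : Set (EuclideanSpace ℝ ι)) (hs : s ⊆ Metric.closedBall 0 R) :
    ∃ t : Finset (EuclideanSpace ℝ ι), ↑t ⊆ s ∧
      (t.card : ℝ) ≤ (1 + 2 * R / r) ^ (Fintype.card ι) ∧
      ∀ x ∈ s, ∃ y ∈ t, dist x y ≤ r := by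
  classical
  haveI : Nontrivial (EuclideanSpace ℝ ι) := inferInstance
  set n := Fintype.card ι with hn
  have hfr : Module.finrank ℝ (EuclideanSpace ℝ ι) = n := finrank_euclideanSpace
  set c := volume (ball (0:EuclideanSpace ℝ ι) 1) with hc
  have hc0 : c ≠ 0 := (measure_ball_pos volume 0 one_pos).ne'
  have hctop : c ≠ ⊤ := measure_ball_lt_top.ne
  have hr2 : (0:ℝ) ≤ r / 2 := by linarith
  -- cardinality bound for r-separated subsets of s
  have key : ∀ t : Finset (EuclideanSpace ℝ ι), ↑t ⊆ s →
      ((↑t : Set (EuclideanSpace ℝ ι)).Pairwise fun y z => r < dist y z) →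
      (t.card : ℝ) ≤ (1 + 2 * R / r) ^ n := by
    intro t hts hsep
    have hdisj : (↑t : Set (EuclideanSpace ℝ ι)).PairwiseDisjoint fun y => ball y (r/2) := by
      intro y hy z hz hyz
      exact ball_disjoint_ball (by linarith [hsep hy hz hyz])
    have hmeas := measure_biUnion_finset hdisj (fun y _ => measurableSet_ball)
      (μ := volume)
    have hsub : (⋃ y ∈ t, ball y (r/2)) ⊆ closedBall (0:EuclideanSpace ℝ ι) (R + r/2) := by
      intro x hx
      simp only [Set.mem_iUnion] at hx
      obtain ⟨y, hy, hxy⟩ := hx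
      have hyR : dist y 0 ≤ R := mem_closedBall.1 (hs (hts hy))
      have : dist x y < r/2 := mem_ball.1 hxy
      have : dist x 0 ≤ dist x y + dist y 0 := dist_triangle _ _ _
      exact mem_closedBall.2 (by linarith)
    have hvols : ∀ y : EuclideanSpace ℝ ι, volume (ball y (r/2))
        = ENNReal.ofReal ((r/2) ^ n) * c := by
      intro y
      rw [Measure.addHaar_ball volume y hr2, hfr]
    have hub : (t.card : ℝ≥0∞) * (ENNReal.ofReal ((r/2) ^ n) * c)
        ≤ ENNReal.ofReal ((R + r/2) ^ n) * c := by
      calc ((t.card : ℝ≥0∞)) * (ENNReal.ofReal ((r/2) ^ n) * c)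
          = ∑ y ∈ t, volume (ball y (r/2)) := by
            simp [hvols, Finset.sum_const, nsmul_eq_mul]
        _ = volume (⋃ y ∈ t, ball y (r/2)) := hmeas.symm
        _ ≤ volume (closedBall (0:EuclideanSpace ℝ ι) (R + r/2)) := measure_mono hsub
        _ = ENNReal.ofReal ((R + r/2) ^ n) * c := by
            rw [Measure.addHaar_closedBall volume _ (by linarith), hfr]
    rw [← mul_assoc] at hub
    have hub2 : ((t.card : ℝ≥0∞)) * ENNReal.ofReal ((r/2) ^ n)
        ≤ ENNReal.ofReal ((R + r/2) ^ n) :=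
      (ENNReal.mul_le_mul_iff_left hc0 hctop).1 hub
    have hreal : (t.card : ℝ) * (r/2) ^ n ≤ (R + r/2) ^ n := by
      have := hub2
      rw [← ENNReal.ofReal_natCast, ← ENNReal.ofReal_mul (by positivity)] at this
      exact (ENNReal.ofReal_le_ofReal_iff (by positivity)).1 this
    have hrpos : (0:ℝ) < (r/2) ^ n := by positivity
    rw [← le_div_iff₀ hrpos] at hreal
    calc (t.card : ℝ) ≤ (R + r/2) ^ n / (r/2) ^ n := hreal
      _ = ((R + r/2) / (r/2)) ^ n := (div_pow _ _ _).symm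
      _ = (1 + 2 * R / r) ^ n := by
          congr 1
          field_simp
          ring
  -- take a maximal separated set
  set K : Set ℕ := {k | ∃ t : Finset (EuclideanSpace ℝ ι), ↑t ⊆ s ∧
      ((↑t : Set (EuclideanSpace ℝ ι)).Pairwise fun y z => r < dist y z) ∧ t.card = k} with hK
  have hK0 : 0 ∈ K := ⟨∅, by simp, by simp, rfl⟩
  have hKbdd : BddAbove K := by
    refine ⟨⌈(1 + 2 * R / r) ^ n⌉₊, fun k hk => ?_⟩
    obtain ⟨t, hts, hsep, hcard⟩ := hk
    have := key t hts hsep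
    rw [hcard] at this
    have h2 : (k:ℝ) ≤ ((⌈(1 + 2 * R / r) ^ n⌉₊ : ℕ) : ℝ) := this.trans (Nat.le_ceil _)
    exact_mod_cast h2
  obtain ⟨t, hts, hsep, hcard⟩ := Nat.sSup_mem ⟨0, hK0⟩ hKbdd
  refine ⟨t, hts, key t hts hsep, ?_⟩
  intro x hx
  by_contra hcon
  push_neg at hcon
  have hxt : x ∉ t := by
    intro hxt
    have := hcon x hxt
    rw [dist_self] at this
    linarith
  have hsep' : ((↑(insert x t) : Set (EuclideanSpace ℝ ι)).Pairwise fun y z => r < dist y z) := by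
    haveI : Std.Symm (fun y z : EuclideanSpace ℝ ι => r < dist y z) := ⟨fun y z h => by rwa [dist_comm]⟩
    rw [Finset.coe_insert,
      Set.pairwise_insert_of_symm]
    exact ⟨hsep, fun z hz _ => hcon z hz⟩
  have hmem : t.card + 1 ∈ K :=
    ⟨insert x t, by simp [Set.insert_subset_iff, hx, hts], hsep',
      by rw [Finset.card_insert_of_notMem hxt]⟩
  have := le_csSup hKbdd hmem
  rw [hcard] at this
  omega

lemma enorm_sqrt {ι : Type*} [Fintype ι] (v : EuclideanSpace ℝ ι) :
    ‖v‖ = Real.sqrt (∑ i, v i ^ 2) := by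
  rw [EuclideanSpace.norm_eq]
  congr 1
  exact Finset.sum_congr rfl fun i _ => by rw [Real.norm_eq_abs, sq_abs]

lemma edist_sqrt {ι : Type*} [Fintype ι] (v w : EuclideanSpace ℝ ι) :
    dist v w = Real.sqrt (∑ i, (v i - w i) ^ 2) := by
  rw [EuclideanSpace.dist_eq]
  congr 1
  exact Finset.sum_congr rfl fun i _ => by rw [Real.dist_eq, sq_abs]

lemma quad_eq {d : ℕ} (M : Matrix (Fin d) (Fin d) ℝ) (u : Fin d → ℝ) :
    u ⬝ᵥ M *ᵥ u = ∑ p : Fin d × Fin d, M p.1 p.2 * (u p.1 * u p.2) := by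
  rw [Fintype.sum_prod_type]
  simp only [dotProduct, Matrix.mulVec, Finset.mul_sum]
  exact Finset.sum_congr rfl fun i _ => Finset.sum_congr rfl fun j _ => by ring

theorem value_class_covering {S 𝒜 : Type*} [Fintype 𝒜] [Nonempty 𝒜]
    (d : ℕ) (hd : 1 ≤ d) (H : ℝ) (hH : 0 < H)
    (φ : S → 𝒜 → Fin d → ℝ)
    (hφ : ∀ x a, Real.sqrt (∑ i, φ x a i ^ 2) ≤ 1)
    (V : (Fin d → ℝ) → Matrix (Fin d) (Fin d) ℝ → S → ℝ)
    (hV : ∀ w A x, V w A x =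
      min (Finset.univ.sup' Finset.univ_nonempty fun a : 𝒜 =>
        (∑ i, w i * φ x a i) + Real.sqrt (φ x a ⬝ᵥ A *ᵥ φ x a)) H)
    (L B lam ε : ℝ) (hL : 0 < L) (hB : 0 < B) (hlam : 0 < lam) (hε : 0 < ε) :
    ∃ C : Finset ((Fin d → ℝ) × Matrix (Fin d) (Fin d) ℝ),
      (∀ p ∈ C, Real.sqrt (∑ i, p.1 i ^ 2) ≤ L ∧ p.2.PosSemidef ∧
        Real.sqrt (∑ i, ∑ j, p.2 i j ^ 2) ≤ Real.sqrt d * B ^ 2 / lam) ∧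
      (C.card : ℝ) ≤ (1 + 4 * L / ε) ^ d *
        (1 + 8 * Real.sqrt d * B ^ 2 / (lam * ε ^ 2)) ^ (d ^ 2) ∧
      ∀ w : Fin d → ℝ, ∀ A : Matrix (Fin d) (Fin d) ℝ,
        Real.sqrt (∑ i, w i ^ 2) ≤ L → A.PosSemidef →
        Real.sqrt (∑ i, ∑ j, A i j ^ 2) ≤ Real.sqrt d * B ^ 2 / lam →
        ∃ p ∈ C, ∀ x : S, |V w A x - V p.1 p.2 x| ≤ ε := by
  classical
  haveI : Nonempty (Fin d) := ⟨⟨0, hd⟩⟩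
  set RA := Real.sqrt d * B ^ 2 / lam with hRAdef
  have hRA : 0 ≤ RA := by positivity
  have hε2 : (0:ℝ) < ε / 2 := by linarith
  have hr2 : (0:ℝ) < ε ^ 2 / 4 := by positivity
  -- nets
  obtain ⟨t1, ht1s, ht1card, ht1cov⟩ := packing_lemma (ι := Fin d) hL.le hε2
    (Metric.closedBall 0 L) (subset_refl _)
  set s2 : Set (EuclideanSpace ℝ (Fin d × Fin d)) :=
    {v | (Matrix.of fun i j => v (i, j)).PosSemidef ∧ v ∈ Metric.closedBall 0 RA}
    with hs2def
  obtain ⟨t2, ht2s, ht2card, ht2cov⟩ := packing_lemma hRA hr2 s2 (fun v hv => hv.2)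
  -- the cover
  refine ⟨(t1 ×ˢ t2).image fun q =>
    ((WithLp.equiv 2 (Fin d → ℝ)) q.1, Matrix.of fun i j => q.2 (i, j)), ?_, ?_, ?_⟩
  · rintro p hp
    obtain ⟨q, hq, rfl⟩ := Finset.mem_image.1 hp
    obtain ⟨hq1, hq2⟩ := Finset.mem_product.1 hq
    have h1 : ‖q.1‖ ≤ L := mem_closedBall_zero_iff.1 (ht1s hq1)
    have h2 := ht2s hq2
    refine ⟨?_, h2.1, ?_⟩
    · rw [enorm_sqrt] at h1
      simpa using h1
    · have h3 : ‖q.2‖ ≤ RA := mem_closedBall_zero_iff.1 h2.2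
      rw [enorm_sqrt, Fintype.sum_prod_type] at h3
      simpa using h3
  · calc (((t1 ×ˢ t2).image fun q =>
        ((WithLp.equiv 2 (Fin d → ℝ)) q.1, Matrix.of fun i j => q.2 (i, j))).card : ℝ)
        ≤ ((t1 ×ˢ t2).card : ℝ) := by exact_mod_cast Finset.card_image_le
      _ = (t1.card : ℝ) * (t2.card : ℝ) := by rw [Finset.card_product]; push_cast; ring
      _ ≤ (1 + 4 * L / ε) ^ d * (1 + 8 * Real.sqrt d * B ^ 2 / (lam * ε ^ 2)) ^ (d ^ 2) := by
          have e1 : (1 + 2 * L / (ε / 2)) = 1 + 4 * L / ε := by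
            field_simp; ring
          have e2 : (1 + 2 * RA / (ε ^ 2 / 4)) = 1 + 8 * Real.sqrt d * B ^ 2 / (lam * ε ^ 2) := by
            rw [hRAdef]; field_simp; ring
          have c1 : Fintype.card (Fin d) = d := Fintype.card_fin d
          have c2 : Fintype.card (Fin d × Fin d) = d ^ 2 := by
            rw [Fintype.card_prod, Fintype.card_fin, sq]
          rw [e1, c1] at ht1card
          rw [e2, c2] at ht2card
          exact mul_le_mul ht1card ht2card (Nat.cast_nonneg _) (by positivity)
  · intro w A hw hA hAF
    -- transported points
    set vw : EuclideanSpace ℝ (Fin d) := (WithLp.equiv 2 (Fin d → ℝ)).symm w with hvw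
    have hvwmem : vw ∈ Metric.closedBall (0 : EuclideanSpace ℝ (Fin d)) L := by
      rw [mem_closedBall_zero_iff, enorm_sqrt]
      simpa [hvw] using hw
    obtain ⟨y, hy, hdy⟩ := ht1cov vw hvwmem
    set vA : EuclideanSpace ℝ (Fin d × Fin d) :=
      (WithLp.equiv 2 (Fin d × Fin d → ℝ)).symm (fun p => A p.1 p.2) with hvA
    have hAeq : (Matrix.of fun i j => vA (i, j)) = A := by
      ext i j
      simp [hvA]
    have hvAmem : vA ∈ s2 := by
      refine ⟨by rw [hAeq]; exact hA, ?_⟩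
      rw [mem_closedBall_zero_iff, enorm_sqrt, Fintype.sum_prod_type]
      simpa [hvA] using hAF
    obtain ⟨z, hz, hdz⟩ := ht2cov vA hvAmem
    have hzs := ht2s hz
    refine ⟨((WithLp.equiv 2 (Fin d → ℝ)) y, Matrix.of fun i j => z (i, j)),
      Finset.mem_image.2 ⟨(y, z), Finset.mem_product.2 ⟨hy, hz⟩, rfl⟩, ?_⟩
    intro x
    rw [hV, hV]
    refine (my_abs_min_sub_min _ _ H).trans (my_sup'_diff _ _ _ ε ?_)
    intro a
    set u := φ x a with hu
    have hu2 : ∑ i, u i ^ 2 ≤ 1 := by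
      have h := hφ x a
      have : Real.sqrt (∑ i, u i ^ 2) ^ 2 ≤ 1 ^ 2 :=
        pow_le_pow_left₀ (Real.sqrt_nonneg _) h 2
      rwa [Real.sq_sqrt (by positivity), one_pow] at this
    have husq : Real.sqrt (∑ i, u i ^ 2) ≤ 1 := hφ x a
    -- linear part
    have lin : |(∑ i, w i * u i) - ∑ i, ((WithLp.equiv 2 (Fin d → ℝ)) y) i * u i| ≤ ε / 2 := by
      have : (∑ i, w i * u i) - ∑ i, ((WithLp.equiv 2 (Fin d → ℝ)) y) i * u i
          = ∑ i, (w i - y i) * u i := by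
        rw [← Finset.sum_sub_distrib]
        exact Finset.sum_congr rfl fun i _ => by simp [sub_mul]
      rw [this]
      calc |∑ i, (w i - y i) * u i|
          ≤ Real.sqrt (∑ i, (w i - y i) ^ 2) * Real.sqrt (∑ i, u i ^ 2) := my_cs _ _
        _ ≤ (ε / 2) * 1 := by
            apply mul_le_mul _ husq (Real.sqrt_nonneg _) (by linarith)
            have : Real.sqrt (∑ i, (w i - y i) ^ 2) = dist vw y := by
              rw [edist_sqrt]
              congr 1
            rw [this]; exact hdy
        _ = ε / 2 := mul_one _
    -- quadratic part
    have hQ : 0 ≤ u ⬝ᵥ A *ᵥ u := by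
      have := hA.dotProduct_mulVec_nonneg u
      simpa using this
    have hQ' : 0 ≤ u ⬝ᵥ (Matrix.of fun i j => z (i, j)) *ᵥ u := by
      have := hzs.1.dotProduct_mulVec_nonneg u
      simpa using this
    have quad : |Real.sqrt (u ⬝ᵥ A *ᵥ u)
        - Real.sqrt (u ⬝ᵥ (Matrix.of fun i j => z (i, j)) *ᵥ u)| ≤ ε / 2 := by
      have hdiff : |(u ⬝ᵥ A *ᵥ u) - (u ⬝ᵥ (Matrix.of fun i j => z (i, j)) *ᵥ u)|
          ≤ ε ^ 2 / 4 := by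
        rw [quad_eq, quad_eq]
        have : (∑ p : Fin d × Fin d, A p.1 p.2 * (u p.1 * u p.2))
            - ∑ p : Fin d × Fin d, (Matrix.of fun i j => z (i, j)) p.1 p.2 * (u p.1 * u p.2)
            = ∑ p : Fin d × Fin d, (A p.1 p.2 - z p) * (u p.1 * u p.2) := by
          rw [← Finset.sum_sub_distrib]
          exact Finset.sum_congr rfl fun p _ => by simp [sub_mul]
        rw [this]
        calc |∑ p : Fin d × Fin d, (A p.1 p.2 - z p) * (u p.1 * u p.2)|
            ≤ Real.sqrt (∑ p : Fin d × Fin d, (A p.1 p.2 - z p) ^ 2)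
              * Real.sqrt (∑ p : Fin d × Fin d, (u p.1 * u p.2) ^ 2) := my_cs _ _
          _ ≤ (ε ^ 2 / 4) * 1 := by
              apply mul_le_mul
              · have : Real.sqrt (∑ p : Fin d × Fin d, (A p.1 p.2 - z p) ^ 2)
                    = dist vA z := by
                  rw [edist_sqrt]
                  congr 1
                rw [this]; exact hdz
              · have : ∑ p : Fin d × Fin d, (u p.1 * u p.2) ^ 2
                    = (∑ i, u i ^ 2) * (∑ i, u i ^ 2) := by
                  rw [Fintype.sum_prod_type, Finset.sum_mul_sum]
                  exact Finset.sum_congr rfl fun i _ => Finset.sum_congr rfl fun j _ => by ring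
                rw [this, ← sq, Real.sqrt_sq (by positivity)]
                exact hu2
              · exact Real.sqrt_nonneg _
              · positivity
          _ = ε ^ 2 / 4 := mul_one _
      calc |Real.sqrt (u ⬝ᵥ A *ᵥ u) - Real.sqrt (u ⬝ᵥ (Matrix.of fun i j => z (i, j)) *ᵥ u)|
          ≤ Real.sqrt |(u ⬝ᵥ A *ᵥ u) - (u ⬝ᵥ (Matrix.of fun i j => z (i, j)) *ᵥ u)| :=
            my_abs_sqrt_sub_sqrt hQ hQ'
        _ ≤ Real.sqrt (ε ^ 2 / 4) := Real.sqrt_le_sqrt hdiff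
        _ = ε / 2 := by
            rw [show ε ^ 2 / 4 = (ε / 2) ^ 2 by ring, Real.sqrt_sq (by linarith)]
    calc |((∑ i, w i * u i) + Real.sqrt (u ⬝ᵥ A *ᵥ u))
        - ((∑ i, ((WithLp.equiv 2 (Fin d → ℝ)) y) i * u i)
          + Real.sqrt (u ⬝ᵥ (Matrix.of fun i j => z (i, j)) *ᵥ u))|
        ≤ |(∑ i, w i * u i) - ∑ i, ((WithLp.equiv 2 (Fin d → ℝ)) y) i * u i|
          + |Real.sqrt (u ⬝ᵥ A *ᵥ u)
            - Real.sqrt (u ⬝ᵥ (Matrix.of fun i j => z (i, j)) *ᵥ u)| := by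
          rw [show ((∑ i, w i * u i) + Real.sqrt (u ⬝ᵥ A *ᵥ u))
            - ((∑ i, ((WithLp.equiv 2 (Fin d → ℝ)) y) i * u i)
              + Real.sqrt (u ⬝ᵥ (Matrix.of fun i j => z (i, j)) *ᵥ u))
            = ((∑ i, w i * u i) - ∑ i, ((WithLp.equiv 2 (Fin d → ℝ)) y) i * u i)
              + (Real.sqrt (u ⬝ᵥ A *ᵥ u)
                - Real.sqrt (u ⬝ᵥ (Matrix.of fun i j => z (i, j)) *ᵥ u)) by ring]
          exact abs_add_le _ _
      _ ≤ ε / 2 + ε / 2 := add_le_add lin quad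
      _ = ε := by ring
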